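/- Let X be a quasi-normed lattice. Then X is complete if and only if every positive increasing Cauchy sequence (x_n) in X has a supremum in X. -/

import Mathlib

open Filter Finset

set_option linter.unusedSectionVars false

set_option linter.unusedSectionVars false

section AmemiyaAux

variable {X : Type*} [Lattice X] [AddCommGroup X]
    [CovariantClass X X (· + ·) (· ≤ ·)] [Module ℝ X]

/-- Cauchy condition for a quasi-norm. -/
def NCauchy (N : X → ℝ) (f : ℕ → X) : Prop :=
  ∀ ε : ℝ, 0 < ε → ∃ n₀, ∀ m ≥ n₀, ∀ n ≥ n₀, N (f m - f n) < ε

lemma amemiya_nsmul_nonneg {a : X} (ha : 0 ≤ a) (n : ℕ) : 0 ≤ n • a := by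
  induction n with
  | zero => simp
  | succ n ih => rw [succ_nsmul]; exact add_nonneg ih ha

lemma amemiya_nsmul_le_nsmul {a : X} (ha : 0 ≤ a) {m k : ℕ} (h : m ≤ k) :
    m • a ≤ k • a := by
  have h1 : 0 ≤ (k - m) • a := amemiya_nsmul_nonneg ha _
  calc m • a ≤ m • a + (k - m) • a := le_add_of_nonneg_right h1
    _ = k • a := by rw [← add_nsmul, Nat.add_sub_cancel' h]

lemma amemiya_reflect {a : X} (m : ℕ) (h : 0 ≤ 2 ^ m • a) : 0 ≤ a := by
  induction m generalizing a with
  | zero => simpa using h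
  | succ m ih =>
    apply ih
    apply nsmul_two_semiclosed
    rwa [← mul_nsmul, ← pow_succ]

lemma amemiya_posPart_le_abs (a : X) : a⁺ ≤ |a| := sup_le (le_abs_self a) (abs_nonneg a)

lemma amemiya_negPart_le_abs (a : X) : a⁻ ≤ |a| := sup_le (neg_le_abs a) (abs_nonneg a)

lemma amemiya_sum_nonneg {f : ℕ → X} {s : Finset ℕ} (h : ∀ i ∈ s, 0 ≤ f i) :
    0 ≤ ∑ i ∈ s, f i := by
  induction s using Finset.cons_induction with
  | empty => simp
  | cons a s ha ih =>
    rw [Finset.sum_cons]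
    exact add_nonneg (h a (Finset.mem_cons_self a s))
      (ih fun i hi => h i (Finset.mem_cons_of_mem hi))

lemma amemiya_sum_le_sum {f g : ℕ → X} {s : Finset ℕ} (h : ∀ i ∈ s, f i ≤ g i) :
    ∑ i ∈ s, f i ≤ ∑ i ∈ s, g i := by
  have h1 : 0 ≤ ∑ i ∈ s, (g i - f i) :=
    amemiya_sum_nonneg fun i hi => sub_nonneg.2 (h i hi)
  rw [Finset.sum_sub_distrib] at h1
  exact sub_nonneg.1 h1

section Norm

variable {N : X → ℝ} {K : ℝ}

lemma amemiya_N_neg (hsmul : ∀ (a : ℝ) (x : X), N (a • x) = |a| * N x) (x : X) :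
    N (-x) = N x := by
  calc N (-x) = N ((-1 : ℝ) • x) := by rw [neg_one_smul]
    _ = |(-1 : ℝ)| * N x := hsmul _ _
    _ = N x := by norm_num

lemma amemiya_N_zero (heq0 : ∀ x : X, N x = 0 ↔ x = 0) : N (0 : X) = 0 := (heq0 0).2 rfl

lemma amemiya_sum_bound (hK : 1 ≤ K) (heq0 : ∀ x : X, N x = 0 ↔ x = 0)
    (htri : ∀ x y, N (x + y) ≤ K * (N x + N y)) :
    ∀ (n : ℕ) (a : ℕ → X),
      N (∑ i ∈ range n, a i) ≤ ∑ i ∈ range n, K ^ (i + 1) * N (a i) := by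
  have hK0 : (0:ℝ) ≤ K := zero_le_one.trans hK
  intro n
  induction n with
  | zero => intro a; simp [amemiya_N_zero heq0]
  | succ n ih =>
    intro a
    rw [Finset.sum_range_succ' a n, Finset.sum_range_succ' (fun i => K ^ (i + 1) * N (a i)) n]
    calc N ((∑ i ∈ range n, a (i + 1)) + a 0)
        ≤ K * (N (∑ i ∈ range n, a (i + 1)) + N (a 0)) := htri _ _
      _ ≤ K * ((∑ i ∈ range n, K ^ (i + 1) * N (a (i + 1))) + N (a 0)) := by
          have := ih (fun i => a (i + 1))
          apply mul_le_mul_of_nonneg_left _ hK0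
          exact add_le_add_left this _
      _ = (∑ i ∈ range n, K ^ (i + 1 + 1) * N (a (i + 1))) + K ^ (0 + 1) * N (a 0) := by
          rw [mul_add, Finset.mul_sum]
          congr 1
          · exact Finset.sum_congr rfl fun i _ => by ring
          · ring

lemma amemiya_geo_aux :
    ∀ (m p : ℕ), m ≤ p →
      ∑ k ∈ Finset.Ico m p, ((1:ℝ)/4) ^ (k+1) ≤ (1/4) ^ m - (1/4) ^ p := by
  intro m p h
  induction p, h using Nat.le_induction with
  | base => simp
  | succ p hp ih =>
    rw [Finset.sum_Ico_succ_top hp]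
    have h1 : ((1:ℝ)/4) ^ (p+1) = (1/4) ^ p * (1/4) := pow_succ _ _
    have h2 : (0:ℝ) ≤ (1/4) ^ p := by positivity
    linarith

lemma amemiya_geo (m p : ℕ) :
    ∑ k ∈ Finset.Ico m p, ((1:ℝ)/4) ^ (k+1) ≤ (1/4) ^ m := by
  rcases le_or_gt m p with h | h
  · have h2 : (0:ℝ) ≤ (1/4) ^ p := by positivity
    linarith [amemiya_geo_aux m p h]
  · rw [Finset.Ico_eq_empty (by omega)]
    simp only [Finset.sum_empty]
    positivity

lemma amemiya_sum_est (hK : 1 ≤ K) (hnonneg : ∀ x : X, 0 ≤ N x)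
    (heq0 : ∀ x : X, N x = 0 ↔ x = 0)
    (htri : ∀ x y, N (x + y) ≤ K * (N x + N y))
    {v : ℕ → X} (hv : ∀ k, K ^ (k+1) * N (v k) ≤ ((1:ℝ)/4) ^ (k+1)) (m p : ℕ) :
    N (∑ k ∈ Finset.Ico m p, v k) ≤ ((1:ℝ)/4) ^ m := by
  rw [Finset.sum_Ico_eq_sum_range]
  refine le_trans (amemiya_sum_bound hK heq0 htri (p - m) (fun i => v (m + i))) ?_
  have step : ∀ i ∈ range (p - m),
      K ^ (i + 1) * N (v (m + i)) ≤ ((1:ℝ)/4) ^ (m + i + 1) := by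
    intro i _
    calc K ^ (i + 1) * N (v (m + i)) ≤ K ^ (m + i + 1) * N (v (m + i)) := by
          apply mul_le_mul_of_nonneg_right _ (hnonneg _)
          exact pow_le_pow_right₀ hK (by omega)
      _ ≤ ((1:ℝ)/4) ^ (m + i + 1) := hv _
  refine le_trans (Finset.sum_le_sum step) ?_
  have : ∑ i ∈ range (p - m), ((1:ℝ)/4) ^ (m + i + 1)
      = ∑ k ∈ Finset.Ico m (m + (p - m)), ((1:ℝ)/4) ^ (k + 1) := by
    rw [Finset.sum_Ico_eq_sum_range]
    simp
  rw [this]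
  exact amemiya_geo _ _

lemma amemiya_cauchy_of_est (hK : 1 ≤ K) (hnonneg : ∀ x : X, 0 ≤ N x)
    (heq0 : ∀ x : X, N x = 0 ↔ x = 0)
    (hsmul : ∀ (a : ℝ) (x : X), N (a • x) = |a| * N x)
    (htri : ∀ x y, N (x + y) ≤ K * (N x + N y))
    {v : ℕ → X} (hv : ∀ k, K ^ (k+1) * N (v k) ≤ ((1:ℝ)/4) ^ (k+1)) :
    NCauchy N (fun m => ∑ k ∈ range m, v k) := by
  intro ε hε
  obtain ⟨n₀, hn₀⟩ : ∃ n₀ : ℕ, ((1:ℝ)/4) ^ n₀ < ε :=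
    exists_pow_lt_of_lt_one hε (by norm_num)
  refine ⟨n₀, fun m hm n hn => ?_⟩
  have key : ∀ a b : ℕ, n₀ ≤ a → a ≤ b →
      N ((∑ k ∈ range b, v k) - ∑ k ∈ range a, v k) < ε := by
    intro a b ha hab
    rw [← Finset.sum_Ico_eq_sub v hab]
    calc N (∑ k ∈ Finset.Ico a b, v k) ≤ ((1:ℝ)/4) ^ a :=
          amemiya_sum_est hK hnonneg heq0 htri hv a b
      _ ≤ ((1:ℝ)/4) ^ n₀ := pow_le_pow_of_le_one (by norm_num) (by norm_num) ha
      _ < ε := hn₀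
  rcases le_total n m with h | h
  · exact key n m hn h
  · have := key m n hm h
    rwa [← amemiya_N_neg hsmul, neg_sub] at this

end Norm

end AmemiyaAux

section Norm2

variable {X : Type*} [Lattice X] [AddCommGroup X]
    [CovariantClass X X (· + ·) (· ≤ ·)] [Module ℝ X]
variable {N : X → ℝ} {K : ℝ}

lemma amemiya_subseq (hK : 1 ≤ K) {f : ℕ → X} (hf : NCauchy N f) :
    ∃ j : ℕ → ℕ, StrictMono j ∧
      ∀ k, N (f (j (k+1)) - f (j k)) ≤ ((8*K) ^ (k+1))⁻¹ := by
  have hKpos : (0:ℝ) < K := lt_of_lt_of_le zero_lt_one hK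
  have hpos : ∀ k : ℕ, (0:ℝ) < ((8*K) ^ (k+1))⁻¹ := by
    intro k; positivity
  choose M hM using fun k => hf (((8*K) ^ (k+1))⁻¹) (hpos k)
  let j : ℕ → ℕ := fun k => Nat.rec (M 0) (fun k jk => max (jk + 1) (M (k+1))) k
  have hjM : ∀ k, M k ≤ j k := by
    intro k; cases k with
    | zero => exact le_refl _
    | succ k => exact le_max_right _ _
  have hjmono : StrictMono j := by
    apply strictMono_nat_of_lt_succ
    intro k
    exact lt_of_lt_of_le (Nat.lt_succ_self _) (le_max_left _ _)
  refine ⟨j, hjmono, fun k => ?_⟩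
  have h1 : M k ≤ j (k+1) := le_trans (hjM k) (le_of_lt (hjmono (Nat.lt_succ_self k)))
  exact le_of_lt (hM k (j (k+1)) h1 (j k) (hjM k))

lemma amemiya_isLUB_shift {y : ℕ → X} {s : X} (c : X) (h : IsLUB (Set.range y) s) :
    IsLUB (Set.range fun p => y p - c) (s - c) := by
  constructor
  · rintro _ ⟨p, rfl⟩
    exact sub_le_sub_right (h.1 (Set.mem_range_self p)) c
  · intro b hb
    rw [sub_le_iff_le_add]
    apply h.2
    rintro _ ⟨p, rfl⟩
    have := hb (Set.mem_range_self p)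
    exact sub_le_iff_le_add.mp this

lemma amemiya_isLUB_subseq {y : ℕ → X} (hy : Monotone y) {j : ℕ → ℕ}
    (hj : StrictMono j) {s : X} (h : IsLUB (Set.range y) s) :
    IsLUB (Set.range fun k => y (j k)) s := by
  constructor
  · rintro _ ⟨k, rfl⟩
    exact h.1 (Set.mem_range_self _)
  · intro b hb
    apply h.2
    rintro _ ⟨p, rfl⟩
    exact le_trans (hy hj.le_apply) (hb (Set.mem_range_self p))

lemma amemiya_hv_calc (hK : 1 ≤ K)
    (hsmul : ∀ (a : ℝ) (x : X), N (a • x) = |a| * N x) {d : ℕ → X}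
    (hd : ∀ k, N (d k) ≤ ((8*K) ^ (k+1))⁻¹) (k : ℕ) :
    K ^ (k+1) * N ((2:ℕ) ^ k • d k) ≤ ((1:ℝ)/4) ^ (k+1) := by
  have hKpos : (0:ℝ) < K := lt_of_lt_of_le zero_lt_one hK
  have hN : N ((2:ℕ) ^ k • d k) = (2:ℝ) ^ k * N (d k) := by
    rw [← Nat.cast_smul_eq_nsmul ℝ ((2:ℕ) ^ k) (d k), hsmul]
    congr 1
    push_cast
    rw [abs_of_nonneg (by positivity)]
  rw [hN]
  have h1 : K ^ (k+1) * ((2:ℝ) ^ k * N (d k))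
      ≤ K ^ (k+1) * ((2:ℝ) ^ k * ((8*K) ^ (k+1))⁻¹) := by
    apply mul_le_mul_of_nonneg_left _ (by positivity)
    exact mul_le_mul_of_nonneg_left (hd k) (by positivity)
  refine le_trans h1 ?_
  have h2 : K ^ (k+1) * ((2:ℝ) ^ k * ((8*K) ^ (k+1))⁻¹)
      = (2:ℝ) ^ k * (((8:ℝ) ^ (k+1))⁻¹) := by
    rw [mul_pow]
    have hKne : (K:ℝ) ^ (k+1) ≠ 0 := by positivity
    field_simp
  rw [h2]
  have h3 : ((1:ℝ)/4) ^ (k+1) = (2:ℝ) ^ (k+1) * (((8:ℝ) ^ (k+1))⁻¹) := by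
    rw [← div_eq_mul_inv, ← div_pow]; norm_num
  rw [h3]
  exact mul_le_mul_of_nonneg_right (pow_le_pow_right₀ one_le_two (Nat.le_succ k))
    (by positivity)

lemma amemiya_hv_calc' (hK : 1 ≤ K) {w : ℕ → ℝ}
    (hw : ∀ k, w k ≤ ((8*K) ^ (k+1))⁻¹) (hw0 : ∀ k, 0 ≤ w k) (k : ℕ) :
    K ^ (k+1) * w k ≤ ((1:ℝ)/4) ^ (k+1) := by
  have hKpos : (0:ℝ) < K := lt_of_lt_of_le zero_lt_one hK
  have h1 : K ^ (k+1) * w k ≤ K ^ (k+1) * ((8*K) ^ (k+1))⁻¹ :=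
    mul_le_mul_of_nonneg_left (hw k) (by positivity)
  refine le_trans h1 ?_
  have h2 : K ^ (k+1) * ((8*K) ^ (k+1))⁻¹ = ((8:ℝ) ^ (k+1))⁻¹ := by
    rw [mul_pow]
    have hKne : (K:ℝ) ^ (k+1) ≠ 0 := by positivity
    field_simp
  rw [h2]
  have h3 : ((1:ℝ)/4) ^ (k+1) = (((4:ℝ) ^ (k+1))⁻¹) := by
    rw [one_div, ← inv_pow]
  rw [h3]
  gcongr <;> norm_num

end Norm2

section Big

variable {X : Type*} [Lattice X] [AddCommGroup X]
    [CovariantClass X X (· + ·) (· ≤ ·)] [Module ℝ X]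
variable {N : X → ℝ} {K : ℝ}

/-- A monotone Cauchy sequence with a supremum converges (in quasi-norm) to it,
provided every positive increasing Cauchy sequence has a supremum. -/
lemma amemiya_sup_lim (hK : 1 ≤ K)
    (hnonneg : ∀ x : X, 0 ≤ N x)
    (heq0 : ∀ x : X, N x = 0 ↔ x = 0)
    (hsmul : ∀ (a : ℝ) (x : X), N (a • x) = |a| * N x)
    (htri : ∀ x y, N (x + y) ≤ K * (N x + N y))
    (hlat : ∀ x y : X, |x| ≤ |y| → N x ≤ N y)
    (H : ∀ x : ℕ → X, (∀ n, 0 ≤ x n) → Monotone x → NCauchy N x →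
      ∃ s : X, IsLUB (Set.range x) s)
    {y : ℕ → X} (hmono : Monotone y) (hcau : NCauchy N y) {s : X}
    (hs : IsLUB (Set.range y) s) :
    ∀ ε : ℝ, 0 < ε → ∃ n₀ : ℕ, ∀ n ≥ n₀, N (y n - s) < ε := by
  have hKpos : (0:ℝ) < K := lt_of_lt_of_le zero_lt_one hK
  obtain ⟨j, hj, hjb⟩ := amemiya_subseq hK hcau
  set d : ℕ → X := fun k => y (j (k+1)) - y (j k) with hd_def
  have hd0 : ∀ k, 0 ≤ d k := fun k =>
    sub_nonneg.2 (hmono (hj.monotone (Nat.le_succ k)))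
  set v : ℕ → X := fun k => (2:ℕ) ^ k • d k with hv_def
  have hv : ∀ k, K ^ (k+1) * N (v k) ≤ ((1:ℝ)/4) ^ (k+1) :=
    amemiya_hv_calc hK hsmul hjb
  set z : ℕ → X := fun p => ∑ k ∈ range p, v k with hz_def
  have hv0 : ∀ k, 0 ≤ v k := fun k => amemiya_nsmul_nonneg (hd0 k) _
  have hz0 : ∀ p, 0 ≤ z p := by
    intro p
    rw [hz_def]
    exact amemiya_sum_nonneg fun k _ => hv0 k
  have hzmono : Monotone z := by
    apply monotone_nat_of_le_succ
    intro p
    simp only [hz_def, Finset.sum_range_succ]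
    exact le_add_of_nonneg_right (hv0 p)
  have hzc : NCauchy N z := amemiya_cauchy_of_est hK hnonneg heq0 hsmul htri hv
  obtain ⟨Z, hZ⟩ := H z hz0 hzmono hzc
  have hZ0 : 0 ≤ Z := by
    have h0 : z 0 ≤ Z := hZ.1 (Set.mem_range_self 0)
    simpa [hz_def] using h0
  -- key estimate
  have key : ∀ m : ℕ, N (y (j m) - s) ≤ ((2:ℝ) ^ m)⁻¹ * N Z := by
    intro m
    set u : X := ((2:ℝ) ^ m)⁻¹ • Z with hu_def
    have hsm2 : (2:ℕ) ^ m • u = Z := by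
      rw [hu_def, ← Nat.cast_smul_eq_nsmul ℝ ((2:ℕ) ^ m) _, smul_smul]
      push_cast
      rw [mul_inv_cancel₀ (by positivity), one_smul]
    have hu0 : 0 ≤ u := amemiya_reflect m (by rw [hsm2]; exact hZ0)
    have hub : ∀ p, y (j p) - y (j m) ≤ u := by
      intro p
      rcases le_or_gt p m with hpm | hmp
      · exact le_trans (sub_nonpos.2 (hmono (hj.monotone hpm))) hu0
      · have hmp' : m ≤ p := le_of_lt hmp
        have htel : y (j p) - y (j m) = ∑ k ∈ Finset.Ico m p, d k := by
          rw [Finset.sum_Ico_eq_sum_range]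
          have h := Finset.sum_range_sub (fun i => y (j (m + i))) (p - m)
          rw [Nat.add_sub_cancel' hmp', Nat.add_zero] at h
          rw [← h]
          rfl
        have h1 : (2:ℕ) ^ m • (y (j p) - y (j m)) ≤ Z := by
          rw [htel, Finset.smul_sum]
          calc ∑ k ∈ Finset.Ico m p, (2:ℕ) ^ m • d k
              ≤ ∑ k ∈ Finset.Ico m p, (2:ℕ) ^ k • d k := by
                apply amemiya_sum_le_sum
                intro k hk
                exact amemiya_nsmul_le_nsmul (hd0 k)
                  (Nat.pow_le_pow_right (by norm_num) (Finset.mem_Ico.1 hk).1)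
            _ = z p - z m := by rw [hz_def]; exact Finset.sum_Ico_eq_sub v hmp'
            _ ≤ Z - z m := sub_le_sub_right (hZ.1 (Set.mem_range_self p)) _
            _ ≤ Z := sub_le_self _ (hz0 m)
        have h2 : 0 ≤ (2:ℕ) ^ m • (u - (y (j p) - y (j m))) := by
          rw [nsmul_sub, hsm2]
          exact sub_nonneg.2 h1
        exact sub_nonneg.1 (amemiya_reflect m h2)
    have hsu : s - y (j m) ≤ u := by
      have h2 : IsLUB (Set.range fun p => y (j p) - y (j m)) (s - y (j m)) :=
        amemiya_isLUB_shift _ (amemiya_isLUB_subseq hmono hj hs)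
      apply h2.2
      rintro _ ⟨p, rfl⟩
      exact hub p
    have h0s : 0 ≤ s - y (j m) := sub_nonneg.2 (hs.1 (Set.mem_range_self (j m)))
    have hNle : N (s - y (j m)) ≤ N u := by
      apply hlat
      rw [abs_of_nonneg h0s, abs_of_nonneg hu0]
      exact hsu
    have hNu : N u = ((2:ℝ) ^ m)⁻¹ * N Z := by
      rw [hu_def, hsmul, abs_of_nonneg (by positivity)]
    calc N (y (j m) - s) = N (-(s - y (j m))) := by rw [neg_sub]
      _ = N (s - y (j m)) := amemiya_N_neg hsmul _
      _ ≤ N u := hNle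
      _ = ((2:ℝ) ^ m)⁻¹ * N Z := hNu
  -- conclusion
  intro ε hε
  obtain ⟨n₁, hn₁⟩ := hcau (ε / (2*K)) (by positivity)
  obtain ⟨m₀, hm₀⟩ : ∃ m : ℕ, ((1:ℝ)/2) ^ m < ε / (2*K) / (N Z + 1) := by
    refine exists_pow_lt_of_lt_one ?_ (by norm_num)
    have := hnonneg Z
    positivity
  set m : ℕ := max m₀ n₁ with hm_def
  have hsmall : ((2:ℝ) ^ m)⁻¹ * N Z < ε / (2*K) := by
    have h1 : ((2:ℝ) ^ m)⁻¹ ≤ ((2:ℝ) ^ m₀)⁻¹ := by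
      gcongr
      · norm_num
      · exact le_max_left _ _
    have h2 : ((2:ℝ) ^ m₀)⁻¹ = ((1:ℝ)/2) ^ m₀ := by
      rw [one_div, inv_pow]
    have hNZ : 0 ≤ N Z := hnonneg Z
    calc ((2:ℝ) ^ m)⁻¹ * N Z ≤ ((1:ℝ)/2) ^ m₀ * (N Z + 1) := by
          rw [← h2]
          apply mul_le_mul h1 (by linarith) hNZ (by positivity)
      _ < ε / (2*K) / (N Z + 1) * (N Z + 1) := by
          apply mul_lt_mul_of_pos_right hm₀ (by linarith)
      _ = ε / (2*K) := by field_simp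
  refine ⟨n₁, fun n hn => ?_⟩
  have hjm : n₁ ≤ j m := le_trans (le_max_right m₀ n₁) hj.le_apply
  have h1 : N (y n - y (j m)) < ε / (2*K) := hn₁ n hn (j m) hjm
  have h2 : N (y (j m) - s) < ε / (2*K) := lt_of_le_of_lt (key m) hsmall
  calc N (y n - s) = N ((y n - y (j m)) + (y (j m) - s)) := by rw [sub_add_sub_cancel]
    _ ≤ K * (N (y n - y (j m)) + N (y (j m) - s)) := htri _ _
    _ < K * (ε / (2*K) + ε / (2*K)) := by
        apply mul_lt_mul_of_pos_left _ hKpos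
        exact add_lt_add h1 h2
    _ = ε := by field_simp; ring

end Big


/-- **Amemiya's theorem for quasi-normed lattices.** A quasi-normed lattice `X`
is complete iff every positive increasing Cauchy sequence in `X` has a
supremum in `X`. -/
theorem stmt_1 {X : Type*} [Lattice X] [AddCommGroup X]
    [CovariantClass X X (· + ·) (· ≤ ·)] [Module ℝ X]
    (N : X → ℝ) (K : ℝ) (hK : 1 ≤ K)
    (hnonneg : ∀ x, 0 ≤ N x)
    (heq0 : ∀ x, N x = 0 ↔ x = 0)
    (hsmul : ∀ (a : ℝ) (x : X), N (a • x) = |a| * N x)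
    (htri : ∀ x y, N (x + y) ≤ K * (N x + N y))
    (hlat : ∀ x y : X, |x| ≤ |y| → N x ≤ N y) :
    (∀ f : ℕ → X,
        (∀ ε : ℝ, 0 < ε → ∃ n₀, ∀ m ≥ n₀, ∀ n ≥ n₀, N (f m - f n) < ε) →
        ∃ l : X, Tendsto (fun n => N (f n - l)) atTop (nhds 0)) ↔
    (∀ x : ℕ → X, (∀ n, 0 ≤ x n) → Monotone x →
        (∀ ε : ℝ, 0 < ε → ∃ n₀, ∀ m ≥ n₀, ∀ n ≥ n₀, N (x m - x n) < ε) →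
        ∃ s : X, IsLUB (Set.range x) s) := by
  have hKpos : (0:ℝ) < K := lt_of_lt_of_le zero_lt_one hK
  constructor
  · -- completeness implies existence of suprema
    intro hcomp x hpos hmono hcau
    obtain ⟨l, hl⟩ := hcomp x hcau
    have hconv : ∀ ε : ℝ, 0 < ε → ∃ n₀, ∀ n ≥ n₀, N (x n - l) < ε := by
      intro ε hε
      obtain ⟨n₀, h⟩ := Metric.tendsto_atTop.1 hl ε hε
      refine ⟨n₀, fun n hn => ?_⟩
      have := h n hn
      rwa [Real.dist_eq, sub_zero, abs_of_nonneg (hnonneg _)] at this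
    have hub : ∀ n, x n ≤ l := by
      intro n
      have hNz : N ((x n - l)⁺) ≤ 0 := by
        by_contra h
        push_neg at h
        obtain ⟨n₀, hn₀⟩ := hconv _ h
        set m := max n n₀ with hm_def
        have hle : N ((x n - l)⁺) ≤ N (x m - l) := by
          apply hlat
          rw [abs_of_nonneg (posPart_nonneg _)]
          calc (x n - l)⁺ ≤ (x m - l)⁺ :=
                posPart_mono (sub_le_sub_right (hmono (le_max_left n n₀)) l)
            _ ≤ |x m - l| := amemiya_posPart_le_abs _
        have := hn₀ m (le_max_right n n₀)
        linarith
      have hN0 : N ((x n - l)⁺) = 0 := le_antisymm hNz (hnonneg _)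
      exact sub_nonpos.1 (posPart_eq_zero.1 ((heq0 _).1 hN0))
    refine ⟨l, ?_, ?_⟩
    · rintro _ ⟨n, rfl⟩
      exact hub n
    · intro b hb
      have hNz : N ((l - b)⁺) ≤ 0 := by
        by_contra h
        push_neg at h
        obtain ⟨n₀, hn₀⟩ := hconv _ h
        have hle : N ((l - b)⁺) ≤ N (x n₀ - l) := by
          apply hlat
          rw [abs_of_nonneg (posPart_nonneg _), abs_sub_comm (x n₀) l]
          calc (l - b)⁺ ≤ (l - x n₀)⁺ :=
                posPart_mono (sub_le_sub_left (hb (Set.mem_range_self n₀)) l)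
            _ ≤ |l - x n₀| := amemiya_posPart_le_abs _
        have := hn₀ n₀ (le_refl n₀)
        linarith
      have hN0 : N ((l - b)⁺) = 0 := le_antisymm hNz (hnonneg _)
      exact sub_nonpos.1 (posPart_eq_zero.1 ((heq0 _).1 hN0))
  · -- existence of suprema implies completeness
    intro H f hf
    have H' : ∀ x : ℕ → X, (∀ n, 0 ≤ x n) → Monotone x → NCauchy N x →
        ∃ s : X, IsLUB (Set.range x) s := fun x h1 h2 h3 => H x h1 h2 h3
    obtain ⟨j, hj, hjb⟩ := amemiya_subseq hK (f := f) hf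
    set g : ℕ → X := fun k => f (j k) with hg_def
    set u : ℕ → X := fun k => g (k+1) - g k with hu_def
    have hun : ∀ k, N (u k) ≤ ((8*K) ^ (k+1))⁻¹ := hjb
    have hupos : ∀ k, N ((u k)⁺) ≤ ((8*K) ^ (k+1))⁻¹ := by
      intro k
      refine le_trans (hlat _ _ ?_) (hun k)
      rw [abs_of_nonneg (posPart_nonneg _)]
      exact amemiya_posPart_le_abs _
    have huneg : ∀ k, N ((u k)⁻) ≤ ((8*K) ^ (k+1))⁻¹ := by
      intro k
      refine le_trans (hlat _ _ ?_) (hun k)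
      rw [abs_of_nonneg (negPart_nonneg _)]
      exact amemiya_negPart_le_abs _
    set sp : ℕ → X := fun m => ∑ k ∈ Finset.range m, (u k)⁺ with hsp_def
    set sn : ℕ → X := fun m => ∑ k ∈ Finset.range m, (u k)⁻ with hsn_def
    have hsp0 : ∀ m, 0 ≤ sp m := fun m =>
      amemiya_sum_nonneg fun k _ => posPart_nonneg _
    have hsn0 : ∀ m, 0 ≤ sn m := fun m =>
      amemiya_sum_nonneg fun k _ => negPart_nonneg _
    have hspm : Monotone sp := by
      apply monotone_nat_of_le_succ
      intro m
      rw [hsp_def]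
      simp only [Finset.sum_range_succ]
      exact le_add_of_nonneg_right (posPart_nonneg _)
    have hsnm : Monotone sn := by
      apply monotone_nat_of_le_succ
      intro m
      rw [hsn_def]
      simp only [Finset.sum_range_succ]
      exact le_add_of_nonneg_right (negPart_nonneg _)
    have hspc : NCauchy N sp :=
      amemiya_cauchy_of_est hK hnonneg heq0 hsmul htri
        (amemiya_hv_calc' hK hupos (fun k => hnonneg _))
    have hsnc : NCauchy N sn :=
      amemiya_cauchy_of_est hK hnonneg heq0 hsmul htri
        (amemiya_hv_calc' hK huneg (fun k => hnonneg _))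
    obtain ⟨S, hS⟩ := H' sp hsp0 hspm hspc
    obtain ⟨T, hT⟩ := H' sn hsn0 hsnm hsnc
    have convS := amemiya_sup_lim hK hnonneg heq0 hsmul htri hlat H' hspm hspc hS
    have convT := amemiya_sup_lim hK hnonneg heq0 hsmul htri hlat H' hsnm hsnc hT
    have hrep : ∀ m, g m = g 0 + (sp m - sn m) := by
      intro m
      induction m with
      | zero => simp [hsp_def, hsn_def]
      | succ m ih =>
        have h1 : g (m+1) = g m + u m := by
          show g (m+1) = g m + (g (m+1) - g m)
          abel
        have h2 : u m = (u m)⁺ - (u m)⁻ := (posPart_sub_negPart _).symm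
        rw [h1, ih, h2, hsp_def, hsn_def]
        simp only [Finset.sum_range_succ]
        abel
    set l : X := g 0 + (S - T) with hl_def
    have hgl : ∀ ε : ℝ, 0 < ε → ∃ m₀, ∀ m ≥ m₀, N (g m - l) < ε := by
      intro ε hε
      obtain ⟨a₀, ha⟩ := convS (ε/(2*K)) (by positivity)
      obtain ⟨b₀, hb⟩ := convT (ε/(2*K)) (by positivity)
      refine ⟨max a₀ b₀, fun m hm => ?_⟩
      have harg : g m - l = (sp m - S) + (T - sn m) := by
        rw [hrep m, hl_def]; abel
      have hTsn : N (T - sn m) = N (sn m - T) := by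
        rw [← amemiya_N_neg hsmul (sn m - T), neg_sub]
      calc N (g m - l) = N ((sp m - S) + (T - sn m)) := by rw [harg]
        _ ≤ K * (N (sp m - S) + N (T - sn m)) := htri _ _
        _ < K * (ε/(2*K) + ε/(2*K)) := by
            apply mul_lt_mul_of_pos_left _ hKpos
            have h1 := ha m (le_trans (le_max_left a₀ b₀) hm)
            have h2 := hb m (le_trans (le_max_right a₀ b₀) hm)
            rw [hTsn]
            exact add_lt_add h1 h2
        _ = ε := by field_simp; ring
    refine ⟨l, ?_⟩
    rw [Metric.tendsto_atTop]
    intro ε hε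
    obtain ⟨n₀', h'⟩ := hf (ε/(2*K)) (by positivity)
    obtain ⟨m₀, hm⟩ := hgl (ε/(2*K)) (by positivity)
    set m : ℕ := max m₀ n₀' with hm_def
    refine ⟨n₀', fun n hn => ?_⟩
    rw [Real.dist_eq, sub_zero, abs_of_nonneg (hnonneg _)]
    have hjm : n₀' ≤ j m := le_trans (le_max_right m₀ n₀') hj.le_apply
    have h1 : N (f n - g m) < ε/(2*K) := h' n hn (j m) hjm
    have h2 : N (g m - l) < ε/(2*K) := hm m (le_max_left m₀ n₀')
    calc N (f n - l) = N ((f n - g m) + (g m - l)) := by rw [sub_add_sub_cancel]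
      _ ≤ K * (N (f n - g m) + N (g m - l)) := htri _ _
      _ < K * (ε/(2*K) + ε/(2*K)) := by
          apply mul_lt_mul_of_pos_left _ hKpos
          exact add_lt_add h1 h2
      _ = ε := by field_simp; ring
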